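/- arXiv:1605.04940 — 2 statements merged into one kernel-verified Lean document; each statement's English description precedes it below -/
import Mathlib

section
/- Let δ ∈ ℝ and let ε be a random variable with conditional density h bounded below: h(λ) ≥ h₁ > 0 for all |λ| < τ, where 0 < τ. Then E[(θ - I(ε < δ))(ε - δ)] - E[(θ - I(ε < 0))ε] ≥ (1/2)τ²h₁·I(|δ| > τ), provided P(ε < 0) = θ. -/
open MeasureTheory Set


lemma aux_nu_lb (h : ℝ → ℝ) (h₁ τ : ℝ)
    (hlb : ∀ lam : ℝ, |lam| < τ → h₁ ≤ h lam)
    (s : Set ℝ) (hs : MeasurableSet s) (hsub : s ⊆ Set.Ioo (-τ) τ) :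
    ENNReal.ofReal h₁ * volume s ≤ (volume.withDensity (fun x => ENNReal.ofReal (h x))) s := by
  rw [withDensity_apply _ hs]
  have h1 : ENNReal.ofReal h₁ * volume s = ∫⁻ x, s.indicator (fun _ => ENNReal.ofReal h₁) x := by
    rw [lintegral_indicator hs, setLIntegral_const]
  rw [h1, ← lintegral_indicator hs]
  apply lintegral_mono
  intro x
  by_cases hx : x ∈ s
  · simp only [Set.indicator_of_mem hx]
    apply ENNReal.ofReal_le_ofReal
    apply hlb
    have := hsub hx
    rw [abs_lt]
    exact ⟨this.1, this.2⟩
  · simp [Set.indicator_of_notMem hx]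



lemma aux_ind_integrable (ν : Measure ℝ) [IsFiniteMeasure ν] (a b C : ℝ) (f0 : ℝ → ℝ)
    (hf0 : Measurable f0) (hC : ∀ x, |(Set.Ico a b).indicator f0 x| ≤ C) :
    Integrable ((Set.Ico a b).indicator f0) ν :=
  Integrable.mono' (integrable_const C)
    ((hf0.indicator measurableSet_Ico).aestronglyMeasurable)
    (Filter.Eventually.of_forall hC)

lemma aux_ind_integrable_vol (a b : ℝ) (f0 : ℝ → ℝ) (hf0 : Measurable f0) (C : ℝ)
    (hC : ∀ x, |(Set.Ico a b).indicator f0 x| ≤ C) :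
    Integrable ((Set.Ico a b).indicator f0) volume := by
  have hdom : Integrable ((Set.Icc a b).indicator (fun _ => C)) volume :=
    (integrable_indicator_iff measurableSet_Icc).mpr
      (integrableOn_const measure_Icc_lt_top.ne)
  refine Integrable.mono' hdom ((hf0.indicator measurableSet_Ico).aestronglyMeasurable)
      (Filter.Eventually.of_forall (fun x => ?_))
  by_cases hx : x ∈ Set.Icc a b
  · simpa [Set.indicator_of_mem hx] using hC x
  · have hx' : x ∉ Set.Ico a b := fun h => hx (Set.Ico_subset_Icc_self h)
    simp [Set.indicator_of_notMem hx, Set.indicator_of_notMem hx']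

lemma aux_calc1 (τ : ℝ) (hτ : 0 ≤ τ) :
    ∫ x, (Set.Ico (0:ℝ) τ).indicator (fun x => τ - x) x = τ^2/2 := by
  rw [integral_indicator measurableSet_Ico, integral_Ico_eq_integral_Ioo,
    ← integral_Ioc_eq_integral_Ioo, ← intervalIntegral.integral_of_le hτ,
    intervalIntegral.integral_sub intervalIntegrable_const intervalIntegral.intervalIntegrable_id]
  simp [integral_id]
  ring

lemma aux_calc2 (τ : ℝ) (hτ : 0 ≤ τ) :
    ∫ x, (Set.Ico (-τ) (0:ℝ)).indicator (fun x => x + τ) x = τ^2/2 := by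
  rw [integral_indicator measurableSet_Ico, integral_Ico_eq_integral_Ioo,
    ← integral_Ioc_eq_integral_Ioo, ← intervalIntegral.integral_of_le (by linarith : -τ ≤ (0:ℝ)),
    intervalIntegral.integral_add intervalIntegral.intervalIntegrable_id intervalIntegrable_const]
  simp [integral_id]
  ring

lemma aux_int_lb (ν : Measure ℝ) (τ h₁ : ℝ) (hh₁ : 0 ≤ h₁)
    (hν : ∀ s : Set ℝ, MeasurableSet s → s ⊆ Set.Ioo (-τ) τ → ENNReal.ofReal h₁ * volume s ≤ ν s)
    (f : ℝ → ℝ) (hf0 : ∀ x, 0 ≤ f x) (hsupp : ∀ x ∉ Set.Ioo (-τ) τ, f x = 0)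
    (hfν : Integrable f ν) (hfvol : Integrable f volume) :
    h₁ * ∫ x, f x ≤ ∫ x, f x ∂ν := by
  set S : Set ℝ := Set.Ioo (-τ) τ with hS
  have hSm : MeasurableSet S := measurableSet_Ioo
  set F : ℝ → ENNReal := fun x => ENNReal.ofReal (f x) with hF
  have hle : (ENNReal.ofReal h₁ • volume).restrict S ≤ ν := by
    refine le_trans ?_ (Measure.restrict_le_self (s := S))
    rw [Measure.le_iff]
    intro t ht
    rw [Measure.restrict_apply ht, Measure.restrict_apply ht, Measure.smul_apply, smul_eq_mul]
    exact hν (t ∩ S) (ht.inter hSm) (Set.inter_subset_right)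
  have key : ∫⁻ x, F x ∂((ENNReal.ofReal h₁ • volume).restrict S) ≤ ∫⁻ x, F x ∂ν :=
    lintegral_mono' hle le_rfl
  have hFind : F = S.indicator F := by
    funext x
    by_cases hx : x ∈ S
    · rw [Set.indicator_of_mem hx]
    · rw [Set.indicator_of_notMem hx, hF]; simp [hsupp x hx]
  have hrestr : ∫⁻ x, F x ∂(volume.restrict S) = ∫⁻ x, F x := by
    conv_rhs => rw [hFind]
    rw [lintegral_indicator hSm]
  have hlhs : ∫⁻ x, F x ∂((ENNReal.ofReal h₁ • volume).restrict S)
      = ENNReal.ofReal h₁ * ∫⁻ x, F x := by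
    rw [Measure.restrict_smul, lintegral_smul_measure, hrestr, smul_eq_mul]
  have hvol : ENNReal.ofReal (∫ x, f x) = ∫⁻ x, F x :=
    ofReal_integral_eq_lintegral_ofReal hfvol (Filter.Eventually.of_forall hf0)
  have hνeq : ENNReal.ofReal (∫ x, f x ∂ν) = ∫⁻ x, F x ∂ν :=
    ofReal_integral_eq_lintegral_ofReal hfν (Filter.Eventually.of_forall hf0)
  have hmain : ENNReal.ofReal (h₁ * ∫ x, f x) ≤ ENNReal.ofReal (∫ x, f x ∂ν) := by
    rw [ENNReal.ofReal_mul hh₁, hvol, hνeq, ← hlhs]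
    exact key
  exact (ENNReal.ofReal_le_ofReal_iff (integral_nonneg fun x => hf0 x)).mp hmain

lemma aux_pos (ν : Measure ℝ) [IsFiniteMeasure ν] (τ h₁ δ : ℝ) (hτ : 0 < τ) (hh₁ : 0 < h₁)
    (hδ : τ < δ)
    (hν : ∀ s : Set ℝ, MeasurableSet s → s ⊆ Set.Ioo (-τ) τ → ENNReal.ofReal h₁ * volume s ≤ ν s) :
    1/2 * τ^2 * h₁ ≤ ∫ x, (Set.Ico (0:ℝ) δ).indicator (fun x => δ - x) x ∂ν := by
  have hδ0 : 0 < δ := lt_trans hτ hδ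
  have hCδ : ∀ x, |(Set.Ico (0:ℝ) δ).indicator (fun x => δ - x) x| ≤ δ := by
    intro x
    by_cases hx : x ∈ Set.Ico (0:ℝ) δ
    · rw [Set.indicator_of_mem hx, abs_of_nonneg (by linarith [hx.2])]
      linarith [hx.1]
    · simp [Set.indicator_of_notMem hx, hδ0.le]
  have hCτ : ∀ x, |(Set.Ico (0:ℝ) τ).indicator (fun x => τ - x) x| ≤ τ := by
    intro x
    by_cases hx : x ∈ Set.Ico (0:ℝ) τ
    · rw [Set.indicator_of_mem hx, abs_of_nonneg (by linarith [hx.2])]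
      linarith [hx.1]
    · simp [Set.indicator_of_notMem hx, hτ.le]
  have hmδ : Measurable (fun x : ℝ => δ - x) := measurable_const.sub measurable_id
  have hmτ : Measurable (fun x : ℝ => τ - x) := measurable_const.sub measurable_id
  have hint1 : Integrable ((Set.Ico (0:ℝ) δ).indicator (fun x => δ - x)) ν :=
    aux_ind_integrable ν 0 δ δ _ hmδ hCδ
  have hint2 : Integrable ((Set.Ico (0:ℝ) τ).indicator (fun x => τ - x)) ν :=
    aux_ind_integrable ν 0 τ τ _ hmτ hCτ
  have hint2v : Integrable ((Set.Ico (0:ℝ) τ).indicator (fun x => τ - x)) volume :=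
    aux_ind_integrable_vol 0 τ _ hmτ τ hCτ
  have hmono : ∀ x, (Set.Ico (0:ℝ) τ).indicator (fun x => τ - x) x
      ≤ (Set.Ico (0:ℝ) δ).indicator (fun x => δ - x) x := by
    intro x
    by_cases hx : x ∈ Set.Ico (0:ℝ) τ
    · have hx' : x ∈ Set.Ico (0:ℝ) δ := ⟨hx.1, lt_trans hx.2 hδ⟩
      rw [Set.indicator_of_mem hx, Set.indicator_of_mem hx']
      linarith
    · rw [Set.indicator_of_notMem hx]
      exact Set.indicator_nonneg (fun a ha => by linarith [ha.2]) x
  have h1 : ∫ x, (Set.Ico (0:ℝ) τ).indicator (fun x => τ - x) x ∂ν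
      ≤ ∫ x, (Set.Ico (0:ℝ) δ).indicator (fun x => δ - x) x ∂ν :=
    integral_mono hint2 hint1 hmono
  have h2 := aux_int_lb ν τ h₁ hh₁.le hν ((Set.Ico (0:ℝ) τ).indicator (fun x => τ - x))
    (Set.indicator_nonneg (fun a ha => by linarith [ha.2]))
    (by
      intro x hx
      refine Set.indicator_of_notMem (fun hmem => hx ⟨by linarith [hmem.1], hmem.2⟩) _)
    hint2 hint2v
  rw [aux_calc1 τ hτ.le] at h2
  nlinarith [h2, h1]

lemma aux_neg (ν : Measure ℝ) [IsFiniteMeasure ν] (τ h₁ δ : ℝ) (hτ : 0 < τ) (hh₁ : 0 < h₁)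
    (hδ : δ < -τ)
    (hν : ∀ s : Set ℝ, MeasurableSet s → s ⊆ Set.Ioo (-τ) τ → ENNReal.ofReal h₁ * volume s ≤ ν s) :
    1/2 * τ^2 * h₁ ≤ ∫ x, (Set.Ico δ (0:ℝ)).indicator (fun x => x - δ) x ∂ν := by
  have hδ0 : δ < 0 := by linarith
  have hCδ : ∀ x, |(Set.Ico δ (0:ℝ)).indicator (fun x => x - δ) x| ≤ -δ := by
    intro x
    by_cases hx : x ∈ Set.Ico δ (0:ℝ)
    · rw [Set.indicator_of_mem hx, abs_of_nonneg (by linarith [hx.1])]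
      linarith [hx.2]
    · simp only [Set.indicator_of_notMem hx, abs_zero]; linarith
  have hCτ : ∀ x, |(Set.Ico (-τ) (0:ℝ)).indicator (fun x => x + τ) x| ≤ τ := by
    intro x
    by_cases hx : x ∈ Set.Ico (-τ) (0:ℝ)
    · rw [Set.indicator_of_mem hx, abs_of_nonneg (by linarith [hx.1])]
      linarith [hx.2]
    · simp [Set.indicator_of_notMem hx, hτ.le]
  have hmδ : Measurable (fun x : ℝ => x - δ) := measurable_id.sub measurable_const
  have hmτ : Measurable (fun x : ℝ => x + τ) := measurable_id.add measurable_const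
  have hint1 : Integrable ((Set.Ico δ (0:ℝ)).indicator (fun x => x - δ)) ν :=
    aux_ind_integrable ν δ 0 (-δ) _ hmδ hCδ
  have hint2 : Integrable ((Set.Ico (-τ) (0:ℝ)).indicator (fun x => x + τ)) ν :=
    aux_ind_integrable ν (-τ) 0 τ _ hmτ hCτ
  have hint2v : Integrable ((Set.Ico (-τ) (0:ℝ)).indicator (fun x => x + τ)) volume :=
    aux_ind_integrable_vol (-τ) 0 _ hmτ τ hCτ
  have hmono : ∀ x, (Set.Ico (-τ) (0:ℝ)).indicator (fun x => x + τ) x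
      ≤ (Set.Ico δ (0:ℝ)).indicator (fun x => x - δ) x := by
    intro x
    by_cases hx : x ∈ Set.Ico (-τ) (0:ℝ)
    · have hx' : x ∈ Set.Ico δ (0:ℝ) := ⟨by linarith [hx.1], hx.2⟩
      rw [Set.indicator_of_mem hx, Set.indicator_of_mem hx']
      linarith
    · rw [Set.indicator_of_notMem hx]
      exact Set.indicator_nonneg (fun a ha => by linarith [ha.1]) x
  have h1 : ∫ x, (Set.Ico (-τ) (0:ℝ)).indicator (fun x => x + τ) x ∂ν
      ≤ ∫ x, (Set.Ico δ (0:ℝ)).indicator (fun x => x - δ) x ∂ν :=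
    integral_mono hint2 hint1 hmono
  have h2 := aux_int_lb ν τ h₁ hh₁.le hν ((Set.Ico (-τ) (0:ℝ)).indicator (fun x => x + τ))
    (Set.indicator_nonneg (fun a ha => by linarith [ha.1]))
    (by
      intro x hx
      by_cases hmem : x ∈ Set.Ico (-τ) (0:ℝ)
      · rw [Set.indicator_of_mem hmem]
        simp only [Set.mem_Ioo, not_and, not_lt] at hx
        have hxle : x ≤ -τ := by
          by_contra hc
          push_neg at hc
          linarith [hx hc, hmem.2]
        have : x = -τ := le_antisymm hxle hmem.1
        rw [this]; ring
      · rw [Set.indicator_of_notMem hmem])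
    hint2 hint2v
  rw [aux_calc2 τ hτ.le] at h2
  nlinarith [h2, h1]

theorem stmt_7 {Ω : Type*} [MeasurableSpace Ω] (μ : Measure Ω) [IsProbabilityMeasure μ]
    (ε : Ω → ℝ) (hε : Measurable ε) (hint : Integrable ε μ)
    (h : ℝ → ℝ) (hh0 : ∀ x, 0 ≤ h x)
    (hdens : Measure.map ε μ = MeasureTheory.volume.withDensity (fun x => ENNReal.ofReal (h x)))
    (θ h₁ τ δ : ℝ) (hh₁ : 0 < h₁) (hτ : 0 < τ)
    (hlb : ∀ lam : ℝ, |lam| < τ → h₁ ≤ h lam)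
    (hθq : μ {ω | ε ω < 0} = ENNReal.ofReal θ) :
    (∫ ω, (θ - if ε ω < δ then 1 else 0) * (ε ω - δ) ∂μ) -
      (∫ ω, (θ - if ε ω < 0 then 1 else 0) * ε ω ∂μ) ≥
      (1 / 2) * τ ^ 2 * h₁ * (if |δ| > τ then 1 else 0) := by
  classical
  set ν : Measure ℝ := Measure.map ε μ with hνdef
  haveI hνprob : IsProbabilityMeasure ν := Measure.isProbabilityMeasure_map hε.aemeasurable
  have hνlb : ∀ s : Set ℝ, MeasurableSet s → s ⊆ Set.Ioo (-τ) τ →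
      ENNReal.ofReal h₁ * volume s ≤ ν s := by
    intro s hs hsub
    rw [hdens]
    exact aux_nu_lb h h₁ τ hlb s hs hsub
  have hIio0 : μ {ω | ε ω < 0} = ν (Set.Iio 0) := by
    rw [hνdef, Measure.map_apply hε measurableSet_Iio]
    rfl
  have hθ0 : 0 ≤ θ := by
    by_contra hneg
    push_neg at hneg
    have hz : ν (Set.Iio 0) = 0 := by
      rw [← hIio0, hθq, ENNReal.ofReal_eq_zero.mpr hneg.le]
    have h2 := hνlb (Set.Ioo (-τ) 0) measurableSet_Ioo
        (fun x hx => ⟨hx.1, lt_trans hx.2 hτ⟩)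
    have h3 : ν (Set.Ioo (-τ) 0) ≤ ν (Set.Iio 0) := measure_mono (fun x hx => hx.2)
    rw [hz, le_zero_iff] at h3
    rw [h3] at h2
    have hpos : 0 < ENNReal.ofReal h₁ * volume (Set.Ioo (-τ) 0) := by
      rw [Real.volume_Ioo]
      exact ENNReal.mul_pos (ENNReal.ofReal_pos.mpr hh₁).ne'
        (ENNReal.ofReal_pos.mpr (by linarith)).ne'
    exact absurd h2 (by simpa using hpos.not_ge)
  have hθν : (μ {ω | ε ω < 0}).toReal = θ := by rw [hθq, ENNReal.toReal_ofReal hθ0]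
  have hiA : ∀ c : ℝ, Integrable (fun ω => (θ - if ε ω < c then 1 else 0) * (ε ω - c)) μ := by
    intro c
    have h1 : Integrable (fun ω => θ * (ε ω - c)) μ :=
      (hint.sub (integrable_const c)).const_mul θ
    have h2 : Integrable ((ε ⁻¹' Set.Iio c).indicator (fun ω => ε ω - c)) μ :=
      (hint.sub (integrable_const c)).indicator (hε measurableSet_Iio)
    refine (h1.sub h2).congr (Filter.Eventually.of_forall (fun ω => ?_))
    by_cases hc : ε ω < c <;>
      simp [Set.indicator_apply, Set.mem_preimage, Set.mem_Iio, hc] <;> ring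
  have hiB : Integrable (fun ω => (θ - if ε ω < 0 then 1 else 0) * (ε ω)) μ := by
    have := hiA 0
    simpa using this
  have hg1 : Integrable ((ε ⁻¹' Set.Iio (0:ℝ)).indicator (fun _ => δ)) μ :=
    (integrable_const δ).indicator (hε measurableSet_Iio)
  have hg1int : ∫ ω, (ε ⁻¹' Set.Iio (0:ℝ)).indicator (fun _ => δ) ω ∂μ = θ * δ := by
    rw [integral_indicator_const δ (hε measurableSet_Iio)]
    have he : ε ⁻¹' Set.Iio (0:ℝ) = {ω | ε ω < 0} := rfl
    rw [he, measureReal_def, hθν, smul_eq_mul]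
  rcases le_or_gt 0 δ with hδ0 | hδ0
  · -- case 0 ≤ δ
    have hg2 : Integrable ((ε ⁻¹' Set.Ico (0:ℝ) δ).indicator (fun ω => δ - ε ω)) μ :=
      ((integrable_const δ).sub hint).indicator (hε measurableSet_Ico)
    have hpt : ∀ ω, (θ - if ε ω < δ then 1 else 0) * (ε ω - δ)
        - (θ - if ε ω < 0 then 1 else 0) * (ε ω)
        = -(θ*δ) + ((ε ⁻¹' Set.Iio (0:ℝ)).indicator (fun _ => δ) ω
          + (ε ⁻¹' Set.Ico (0:ℝ) δ).indicator (fun ω => δ - ε ω) ω) := by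
      intro ω
      simp only [Set.indicator_apply, Set.mem_preimage, Set.mem_Iio, Set.mem_Ico]
      by_cases h1 : ε ω < 0
      · have h2 : ε ω < δ := lt_of_lt_of_le h1 hδ0
        rw [if_pos h1, if_pos h1, if_pos h2,
          if_neg (show ¬(0 ≤ ε ω ∧ ε ω < δ) from fun hc => absurd hc.1 (not_le.mpr h1))]
        ring
      · by_cases h2 : ε ω < δ
        · rw [if_pos h2, if_neg h1, if_neg h1,
            if_pos (⟨not_lt.mp h1, h2⟩ : (0:ℝ) ≤ ε ω ∧ ε ω < δ)]
          ring
        · rw [if_neg h1, if_neg h1, if_neg h2,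
            if_neg (show ¬(0 ≤ ε ω ∧ ε ω < δ) from fun hc => h2 hc.2)]
          ring
    have hmap2 : ∫ ω, (ε ⁻¹' Set.Ico (0:ℝ) δ).indicator (fun ω => δ - ε ω) ω ∂μ
        = ∫ x, (Set.Ico (0:ℝ) δ).indicator (fun x => δ - x) x ∂ν := by
      have hm : Measurable ((Set.Ico (0:ℝ) δ).indicator (fun x => δ - x)) :=
        ((measurable_const.sub measurable_id : Measurable (fun x : ℝ => δ - x))).indicator
          measurableSet_Ico
      rw [hνdef, integral_map hε.aemeasurable hm.aestronglyMeasurable]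
      exact integral_congr_ae (Filter.Eventually.of_forall fun ω => Set.indicator_comp_right ε)
    have hdiff : (∫ ω, (θ - if ε ω < δ then 1 else 0) * (ε ω - δ) ∂μ) -
        (∫ ω, (θ - if ε ω < 0 then 1 else 0) * ε ω ∂μ)
        = ∫ x, (Set.Ico (0:ℝ) δ).indicator (fun x => δ - x) x ∂ν := by
      rw [← integral_sub (hiA δ) hiB]
      rw [integral_congr_ae (Filter.Eventually.of_forall hpt)]
      have hsum : Integrable (fun ω => (ε ⁻¹' Set.Iio (0:ℝ)).indicator (fun _ => δ) ω
          + (ε ⁻¹' Set.Ico (0:ℝ) δ).indicator (fun ω => δ - ε ω) ω) μ := hg1.add hg2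
      rw [integral_add (integrable_const _) hsum, integral_add hg1 hg2,
        integral_const, hg1int, hmap2]
      simp
    rw [ge_iff_le, hdiff]
    by_cases habs : |δ| > τ
    · rw [if_pos habs]
      have hδτ : τ < δ := by rwa [abs_of_nonneg hδ0] at habs
      have hkey := aux_pos ν τ h₁ δ hτ hh₁ hδτ hνlb
      nlinarith [hkey]
    · rw [if_neg habs]
      have hnn : 0 ≤ ∫ x, (Set.Ico (0:ℝ) δ).indicator (fun x => δ - x) x ∂ν :=
        integral_nonneg (Set.indicator_nonneg (fun a ha => by linarith [ha.2]))
      nlinarith [hnn]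
  · -- case δ < 0
    have hg2 : Integrable ((ε ⁻¹' Set.Ico δ (0:ℝ)).indicator (fun ω => ε ω - δ)) μ :=
      (hint.sub (integrable_const δ)).indicator (hε measurableSet_Ico)
    have hpt : ∀ ω, (θ - if ε ω < δ then 1 else 0) * (ε ω - δ)
        - (θ - if ε ω < 0 then 1 else 0) * (ε ω)
        = -(θ*δ) + ((ε ⁻¹' Set.Iio (0:ℝ)).indicator (fun _ => δ) ω
          + (ε ⁻¹' Set.Ico δ (0:ℝ)).indicator (fun ω => ε ω - δ) ω) := by
      intro ω
      simp only [Set.indicator_apply, Set.mem_preimage, Set.mem_Iio, Set.mem_Ico]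
      by_cases h1 : ε ω < δ
      · have h2 : ε ω < 0 := lt_trans h1 hδ0
        rw [if_pos h1, if_pos h2, if_pos h2,
          if_neg (show ¬(δ ≤ ε ω ∧ ε ω < 0) from fun hc => absurd hc.1 (not_le.mpr h1))]
        ring
      · by_cases h2 : ε ω < 0
        · rw [if_neg h1, if_pos h2, if_pos h2,
            if_pos (⟨not_lt.mp h1, h2⟩ : δ ≤ ε ω ∧ ε ω < 0)]
          ring
        · rw [if_neg h1, if_neg h2, if_neg h2,
            if_neg (show ¬(δ ≤ ε ω ∧ ε ω < 0) from fun hc => h2 hc.2)]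
          ring
    have hmap2 : ∫ ω, (ε ⁻¹' Set.Ico δ (0:ℝ)).indicator (fun ω => ε ω - δ) ω ∂μ
        = ∫ x, (Set.Ico δ (0:ℝ)).indicator (fun x => x - δ) x ∂ν := by
      have hm : Measurable ((Set.Ico δ (0:ℝ)).indicator (fun x => x - δ)) :=
        ((measurable_id.sub measurable_const : Measurable (fun x : ℝ => x - δ))).indicator
          measurableSet_Ico
      rw [hνdef, integral_map hε.aemeasurable hm.aestronglyMeasurable]
      exact integral_congr_ae (Filter.Eventually.of_forall fun ω =>
        Set.indicator_comp_right (s := Set.Ico δ (0:ℝ)) (g := fun x => x - δ) ε)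
    have hdiff : (∫ ω, (θ - if ε ω < δ then 1 else 0) * (ε ω - δ) ∂μ) -
        (∫ ω, (θ - if ε ω < 0 then 1 else 0) * ε ω ∂μ)
        = ∫ x, (Set.Ico δ (0:ℝ)).indicator (fun x => x - δ) x ∂ν := by
      rw [← integral_sub (hiA δ) hiB]
      rw [integral_congr_ae (Filter.Eventually.of_forall hpt)]
      have hsum : Integrable (fun ω => (ε ⁻¹' Set.Iio (0:ℝ)).indicator (fun _ => δ) ω
          + (ε ⁻¹' Set.Ico δ (0:ℝ)).indicator (fun ω => ε ω - δ) ω) μ := hg1.add hg2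
      rw [integral_add (integrable_const _) hsum, integral_add hg1 hg2,
        integral_const, hg1int, hmap2]
      simp
    rw [ge_iff_le, hdiff]
    by_cases habs : |δ| > τ
    · rw [if_pos habs]
      have hδτ : δ < -τ := by
        rw [abs_of_neg hδ0] at habs
        linarith
      have hkey := aux_neg ν τ h₁ δ hτ hh₁ hδτ hνlb
      nlinarith [hkey]
    · rw [if_neg habs]
      have hnn : 0 ≤ ∫ x, (Set.Ico δ (0:ℝ)).indicator (fun x => x - δ) x ∂ν :=
        integral_nonneg (Set.indicator_nonneg (fun a ha => by linarith [ha.1]))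
      nlinarith [hnn]
end

section
/- For a random variable ε with density h and P(ε ≤ 0) = θ ∈ (0,1), and any δ > 0, E[ρ_θ(ε - δ)] - E[ρ_θ(ε)] = ∫₀^δ (δ - λ)·h(λ) dλ ≥ 0, where ρ_θ is the check loss. -/
open MeasureTheory

noncomputable def checkLoss (θ u : ℝ) : ℝ := (θ - if u < 0 then 1 else 0) * u

theorem stmt_8 {Ω : Type*} [MeasurableSpace Ω] (μ : Measure Ω) [IsProbabilityMeasure μ]
    (ε : Ω → ℝ) (hε : Measurable ε) (hint : Integrable ε μ)
    (h : ℝ → ℝ) (hh0 : ∀ x, 0 ≤ h x) (hhc : Continuous h)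
    (hdens : Measure.map ε μ = MeasureTheory.volume.withDensity (fun x => ENNReal.ofReal (h x)))
    (θ : ℝ) (hθ0 : 0 < θ) (hθ1 : θ < 1)
    (hθq : μ {ω | ε ω ≤ 0} = ENNReal.ofReal θ)
    (δ : ℝ) (hδ : 0 < δ) :
    (∫ ω, checkLoss θ (ε ω - δ) ∂μ) - (∫ ω, checkLoss θ (ε ω) ∂μ) =
      (∫ x in Set.Ioc 0 δ, (δ - x) * h x) ∧
    0 ≤ ∫ x in Set.Ioc 0 δ, (δ - x) * h x := by
  have hnonneg : 0 ≤ ∫ x in Set.Ioc 0 δ, (δ - x) * h x := by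
    apply setIntegral_nonneg measurableSet_Ioc
    intro x hx
    exact mul_nonneg (by linarith [hx.2]) (hh0 x)
  refine ⟨?_, hnonneg⟩
  -- measurability of checkLoss
  have hmL : Measurable (fun u : ℝ => checkLoss θ u) := by
    unfold checkLoss
    exact (measurable_const.sub
      (Measurable.ite (measurableSet_lt measurable_id measurable_const)
        measurable_const measurable_const)).mul measurable_id
  -- bound |checkLoss θ u| ≤ |u|
  have hbound : ∀ u : ℝ, ‖checkLoss θ u‖ ≤ ‖u‖ := by
    intro u
    unfold checkLoss
    rw [norm_mul]
    have : ‖θ - if u < 0 then 1 else 0‖ ≤ 1 := by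
      split_ifs <;> rw [Real.norm_eq_abs, abs_le] <;> constructor <;> linarith
    calc ‖θ - if u < 0 then 1 else 0‖ * ‖u‖ ≤ 1 * ‖u‖ :=
          mul_le_mul_of_nonneg_right this (norm_nonneg _)
      _ = ‖u‖ := one_mul _
  -- integrability of the two checkLoss compositions
  have hInt1 : Integrable (fun ω => checkLoss θ (ε ω)) μ :=
    hint.norm.mono' ((hmL.comp hε).aestronglyMeasurable)
      (Filter.Eventually.of_forall fun ω => by simpa using hbound (ε ω))
  have hInt2 : Integrable (fun ω => checkLoss θ (ε ω - δ)) μ := by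
    have : Integrable (fun ω => ‖ε ω - δ‖) μ := (hint.sub (integrable_const δ)).norm
    exact this.mono' ((hmL.comp (hε.sub measurable_const)).aestronglyMeasurable)
      (Filter.Eventually.of_forall fun ω => hbound (ε ω - δ))
  -- the two indicator pieces
  set f1 : ℝ → ℝ := Set.indicator (Set.Iic (0:ℝ)) (fun _ => δ) with hf1
  set f2 : ℝ → ℝ := Set.indicator (Set.Ioc (0:ℝ) δ) (fun x => δ - x) with hf2
  -- pointwise identity
  have hpt : ∀ u : ℝ, checkLoss θ (u - δ) - checkLoss θ u = f1 u + f2 u - θ * δ := by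
    intro u
    simp only [hf1, hf2, Set.indicator_apply, Set.mem_Iic, Set.mem_Ioc, checkLoss]
    split_ifs <;> (try push_neg at *) <;>
      first
      | linarith
      | (obtain ⟨ha, hb⟩ := ‹0 < u ∧ u ≤ δ›; linarith)
      | (have := ‹0 < u → δ < u› ‹0 < u›; linarith)
  -- integrability of the composed pieces
  have hf1m : MeasurableSet (ε ⁻¹' Set.Iic (0:ℝ)) := hε measurableSet_Iic
  have hf2m : MeasurableSet (ε ⁻¹' Set.Ioc (0:ℝ) δ) := hε measurableSet_Ioc
  have hcomp1 : ∀ ω, f1 (ε ω) = Set.indicator (ε ⁻¹' Set.Iic (0:ℝ)) (fun _ => δ) ω := by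
    intro ω; rw [hf1]; exact (Set.indicator_comp_right ε (g := fun _ => δ) (x := ω)).symm
  have hcomp2 : ∀ ω, f2 (ε ω) =
      Set.indicator (ε ⁻¹' Set.Ioc (0:ℝ) δ) (fun ω => δ - ε ω) ω := by
    intro ω; rw [hf2]
    exact (Set.indicator_comp_right ε (g := fun x => δ - x) (x := ω)).symm
  have hIntf1 : Integrable (fun ω => f1 (ε ω)) μ := by
    simp only [hcomp1]
    exact (integrable_const δ).indicator hf1m
  have hIntf2 : Integrable (fun ω => f2 (ε ω)) μ := by
    simp only [hcomp2]
    exact ((integrable_const δ).sub hint).indicator hf2m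
  -- compute ∫ f1 ∘ ε
  have hI1 : (∫ ω, f1 (ε ω) ∂μ) = θ * δ := by
    simp only [hcomp1]
    rw [integral_indicator_const δ hf1m]
    have : ε ⁻¹' Set.Iic (0:ℝ) = {ω | ε ω ≤ 0} := rfl
    rw [this, measureReal_def, hθq, ENNReal.toReal_ofReal hθ0.le]
    simp [mul_comm]
  -- compute ∫ f2 ∘ ε via the density
  have hI2 : (∫ ω, f2 (ε ω) ∂μ) = ∫ x in Set.Ioc 0 δ, (δ - x) * h x := by
    have hf2sm : AEStronglyMeasurable f2 (Measure.map ε μ) := by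
      apply Measurable.aestronglyMeasurable
      exact (measurable_const.sub measurable_id).indicator measurableSet_Ioc
    rw [← integral_map hε.aemeasurable hf2sm, hdens]
    have hdeq : (fun x => ENNReal.ofReal (h x)) =
        fun x => (((h x).toNNReal : NNReal) : ENNReal) := rfl
    rw [hdeq, integral_withDensity_eq_integral_smul hhc.measurable.real_toNNReal]
    rw [← integral_indicator measurableSet_Ioc]
    congr 1
    funext x
    rw [hf2]
    by_cases hx : x ∈ Set.Ioc (0:ℝ) δ <;>
      simp [hx, Set.indicator_of_mem, Set.indicator_of_notMem, NNReal.smul_def,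
        Real.coe_toNNReal _ (hh0 x), mul_comm]
  -- put it together
  rw [← integral_sub hInt2 hInt1]
  have : (fun ω => checkLoss θ (ε ω - δ) - checkLoss θ (ε ω)) =
      fun ω => f1 (ε ω) + f2 (ε ω) - θ * δ := by
    funext ω; exact hpt (ε ω)
  have hsum : Integrable (fun ω => f1 (ε ω) + f2 (ε ω)) μ := hIntf1.add hIntf2
  rw [this, integral_sub hsum (integrable_const _),
    integral_add hIntf1 hIntf2, hI1, hI2, integral_const]
  simp
end
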